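/- Let σ ∈ 𝒞_q be a q-cycle with des(σ) = d ≥ 2 and transition matrix A. Then there is a unique probability vector ℓ ∈ ℝ^q with Aℓ = dℓ; moreover ℓ has strictly positive components and satisfies ℓ = lim_{n→∞} (1/dⁿ) Aⁿ v for every probability vector v ∈ ℝ^q. -/

import Mathlib

open scoped Classical

noncomputable section

/-- The representative of `i : ZMod q` in `{1, …, q}`. -/
def rep (q : ℕ) [NeZero q] (i : ZMod q) : ℕ :=
  if i = 0 then q else i.val

/-- The rotation `ρ : i ↦ i + 1 (mod q)` of `ZMod q`. -/
def rotPerm (q : ℕ) : Equiv.Perm (ZMod q) :=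
  Equiv.addRight 1

/-- The descent number `des σ`: the number of `i ∈ ZMod q` with `σ(i) > σ(i+1)`,
values compared via their representatives in `{1, …, q}`. -/
def desNum (q : ℕ) [NeZero q] (σ : Equiv.Perm (ZMod q)) : ℕ :=
  (Finset.univ.filter fun i : ZMod q => rep q (σ (i + 1)) < rep q (σ i)).card

/-- `σ` is a `q`-cycle, i.e. it acts transitively on `ZMod q`. -/
def IsQCycle (q : ℕ) (σ : Equiv.Perm (ZMod q)) : Prop :=
  ∀ i j : ZMod q, ∃ n : ℕ, (σ ^ n) i = j

/-- The transition matrix of `σ`: the `(i,j)` entry is `1` if `j` lies in the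
cyclic interval `[σ(i), σ(i+1))` of `ZMod q` and `0` otherwise. -/
def transMatrix (q : ℕ) [NeZero q] (σ : Equiv.Perm (ZMod q)) :
    Matrix (ZMod q) (ZMod q) ℝ :=
  Matrix.of fun i j => if (j - σ i).val < (σ (i + 1) - σ i).val then (1 : ℝ) else 0

/-- A probability vector: non-negative components summing to `1`. -/
def IsProbVec (q : ℕ) [NeZero q] (v : ZMod q → ℝ) : Prop :=
  (∀ i, 0 ≤ v i) ∧ ∑ i, v i = 1

/-- The symmetry order of `σ`: the order of the stabilizer of `σ` in the rotation
group `⟨ρ⟩` acting by conjugation. -/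
def symOrder (q : ℕ) [NeZero q] (σ : Equiv.Perm (ZMod q)) : ℕ :=
  ((Finset.range q).filter fun j => rotPerm q ^ j * σ * (rotPerm q ^ j)⁻¹ = σ).card

/-- `F : ℝ → ℝ` is a lift of a degree `k` covering map of `ℝ/ℤ`:
a homeomorphism of `ℝ` with `F (t+1) = F t + k`. -/
def IsDegreeLift (k : ℕ) (F : ℝ → ℝ) : Prop :=
  Continuous F ∧ StrictMono F ∧ ∀ t, F (t + 1) = F t + k

/-- The fixed point of the circle map corresponding to `u` (a point with
`F u - u ∈ ℤ`) is topologically repelling: `t ↦ F t - t` is strictly increasing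
in a neighborhood of `u`. -/
def TopRepelling (F : ℝ → ℝ) (u : ℝ) : Prop :=
  ∃ ε > 0, StrictMonoOn (fun t => F t - t) (Set.Ioo (u - ε) (u + ε))

/-- `x : ZMod q → ℝ` is a period `q` orbit realizing `σ` for the circle map with
lift `F`: the points `x i` lie in `(0,1)` and are increasing with respect to the
representatives `{1, …, q}` (so that `0, x₁, …, x_q` are in positive cyclic
order), and on the circle `f(x i) = x (σ i)` for all `i`. -/
def IsRealization (q : ℕ) [NeZero q] (σ : Equiv.Perm (ZMod q))
    (F : ℝ → ℝ) (x : ZMod q → ℝ) : Prop :=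
  (∀ i, x i ∈ Set.Ioo (0 : ℝ) 1) ∧
  (∀ i j : ZMod q, rep q i < rep q j → x i < x j) ∧
  (∀ i, ∃ m : ℤ, F (x i) = x (σ i) + m)

/-- A realization of `σ` under the multiplication map `m_k : x ↦ kx (mod ℤ)`. -/
def MkRealization (q k : ℕ) [NeZero q] (σ : Equiv.Perm (ZMod q)) (x : ZMod q → ℝ) : Prop :=
  IsRealization q σ (fun t => (k : ℝ) * t) x

/-- The upper endpoint (as a real number) of the partition interval
`I i = [x i, x (i+1)]`; for `i = 0 ≡ q` the interval wraps around `0 ∈ ℝ/ℤ`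
and the endpoint is `x 1 + 1`. -/
def upperPt (q : ℕ) [NeZero q] (x : ZMod q → ℝ) (i : ZMod q) : ℝ :=
  if i = 0 then x 1 + 1 else x (i + 1)

/-- The `i`-th component of the fixed point distribution: the number of fixed
points of `m_k` (the points `j/(k-1) (mod ℤ)`) in the interior of the partition
interval `I i`. -/
def fixDist (q k : ℕ) [NeZero q] (x : ZMod q → ℝ) (i : ZMod q) : ℕ :=
  ((Finset.Icc 1 (2 * (k - 1))).filter fun j : ℕ =>
    x i < (j : ℝ) / ((k : ℝ) - 1) ∧ (j : ℝ) / ((k : ℝ) - 1) < upperPt q x i).card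

/-- The number of fixed points of `m_k` in the interval `(0, x 1)`. -/
def countFixBelow (q k : ℕ) [NeZero q] (x : ZMod q → ℝ) : ℕ :=
  ((Finset.range (k - 1)).filter fun j : ℕ =>
    0 < j ∧ (j : ℝ) / ((k : ℝ) - 1) < x 1).card

/-- The `m`-th component of the (cumulative) deployment vector: the number of
orbit points in `(0, m/(k-1))`. -/
def depCount (q k : ℕ) [NeZero q] (x : ZMod q → ℝ) (m : ℕ) : ℕ :=
  (Finset.univ.filter fun j : ZMod q => x j < (m : ℝ) / ((k : ℝ) - 1)).card

/-- The rank of a marked index `i` among the marked indices `i₁ < ⋯ < i_{d-1}`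
(ordered by their representatives in `{1, …, q}`). -/
def markRank (q : ℕ) [NeZero q] (σ : Equiv.Perm (ZMod q)) (i : ZMod q) : ℕ :=
  (Finset.univ.filter fun i' : ZMod q =>
    transMatrix q σ i' i' = 1 ∧ rep q i' ≤ rep q i).card

namespace PF
variable {q : ℕ} [NeZero q] (σ : Equiv.Perm (ZMod q))
def len (k : ZMod q) : ℕ := (σ (k + 1) - σ k).val
variable {σ}

lemma add_one_ne (hq : 2 ≤ q) (k : ZMod q) : k + 1 ≠ k := by
  intro h
  have h1 : (1 : ZMod q) = 0 := by linear_combination h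
  have h2 : (1 : ZMod q).val = 1 := by
    rw [ZMod.val_one_eq_one_mod, Nat.mod_eq_of_lt (by omega)]
  rw [h1, ZMod.val_zero] at h2
  exact one_ne_zero h2.symm

lemma one_le_len (hq : 2 ≤ q) (k : ZMod q) : 1 ≤ len σ k := by
  rw [Nat.one_le_iff_ne_zero]
  intro h
  rw [len, ZMod.val_eq_zero, sub_eq_zero] at h
  exact add_one_ne hq k (σ.injective h)

lemma len_lt (k : ZMod q) : len σ k < q := ZMod.val_lt _

lemma A_apply (i j : ZMod q) :
    transMatrix q σ i j = if (j - σ i).val < len σ i then 1 else 0 := rfl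

lemma A_nonneg (i j : ZMod q) : 0 ≤ transMatrix q σ i j := by
  rw [A_apply]; split <;> norm_num

lemma A_pos_iff (i j : ZMod q) : 0 < transMatrix q σ i j ↔ (j - σ i).val < len σ i := by
  rw [A_apply]; split <;> simp_all

-- rep basics
lemma rep_cast (x : ZMod q) : ((rep q x : ℕ) : ZMod q) = x := by
  rw [rep]; split
  · simp [*]
  · exact ZMod.natCast_zmod_val x

lemma one_le_rep (x : ZMod q) : 1 ≤ rep q x := by
  rw [rep]; split
  · exact Nat.one_le_iff_ne_zero.2 (NeZero.ne q)
  · exact Nat.one_le_iff_ne_zero.2 fun h => ‹x ≠ 0› ((ZMod.val_eq_zero x).1 h)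

lemma rep_le (x : ZMod q) : rep q x ≤ q := by
  rw [rep]; split
  · exact le_rfl
  · exact (ZMod.val_lt x).le

lemma rep_injective : Function.Injective (rep q) := by
  intro x y h
  have := rep_cast (q := q) x
  rw [h, rep_cast] at this
  exact this.symm

lemma len_eq_int (hq : 2 ≤ q) (k : ZMod q) :
    (len σ k : ℤ) = (rep q (σ (k+1)) : ℤ) - rep q (σ k) +
      if rep q (σ (k+1)) < rep q (σ k) then (q : ℤ) else 0 := by
  have hne : rep q (σ (k+1)) ≠ rep q (σ k) := fun h =>
    add_one_ne hq k (σ.injective (rep_injective h))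
  have hR1 := one_le_rep (σ (k+1)); have hR2 := rep_le (σ (k+1))
  have hS1 := one_le_rep (σ k); have hS2 := rep_le (σ k)
  have hlen1 := one_le_len (σ := σ) hq k; have hlenq := len_lt (σ := σ) k
  have e1 : ((len σ k : ℕ) : ZMod q) = σ (k+1) - σ k := ZMod.natCast_zmod_val _
  have e2 : ((rep q (σ (k+1)) : ℕ) : ZMod q) = σ (k+1) := rep_cast _
  have e3 : ((rep q (σ k) : ℕ) : ZMod q) = σ k := rep_cast _
  by_cases hdes : rep q (σ (k+1)) < rep q (σ k) <;> simp only [hdes, if_true, if_false]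
  · have hdvd : (q : ℤ) ∣ ((len σ k : ℤ) -
        ((rep q (σ (k+1)) : ℤ) - rep q (σ k) + q)) := by
      rw [← ZMod.intCast_zmod_eq_zero_iff_dvd]
      push_cast
      rw [e1, e2, e3, ZMod.natCast_self]
      ring
    have hb := Int.eq_zero_of_abs_lt_dvd hdvd (by rw [abs_lt]; omega)
    omega
  · have hdvd : (q : ℤ) ∣ ((len σ k : ℤ) -
        ((rep q (σ (k+1)) : ℤ) - rep q (σ k))) := by
      rw [← ZMod.intCast_zmod_eq_zero_iff_dvd]
      push_cast
      rw [e1, e2, e3]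
      ring
    have hb := Int.eq_zero_of_abs_lt_dvd hdvd (by rw [abs_lt]; omega)
    omega

lemma sum_len (hq : 2 ≤ q) : ∑ k : ZMod q, (len σ k : ℤ) = q * desNum q σ := by
  have h1 : ∀ k ∈ Finset.univ, (len σ k : ℤ) = (rep q (σ (k+1)) : ℤ) - rep q (σ k) +
      if rep q (σ (k+1)) < rep q (σ k) then (q : ℤ) else 0 :=
    fun k _ => len_eq_int hq k
  rw [Finset.sum_congr rfl h1, Finset.sum_add_distrib, Finset.sum_sub_distrib]
  have h2 : ∑ k : ZMod q, ((rep q (σ (k+1)) : ℤ)) = ∑ k : ZMod q, (rep q (σ k) : ℤ) :=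
    Fintype.sum_equiv (Equiv.addRight 1) _ _ (fun k => rfl)
  rw [h2, sub_self, zero_add, Finset.sum_ite, Finset.sum_const, Finset.sum_const_zero,
    add_zero, desNum]
  simp [mul_comm]

/-- number of arcs covering `j` -/
def Scount (σ : Equiv.Perm (ZMod q)) (j : ZMod q) : ℕ :=
  (Finset.univ.filter fun k : ZMod q => (j - σ k).val < len σ k).card

lemma val_sub_one (hq : 2 ≤ q) {x : ZMod q} (hx : x ≠ 0) : (x - 1).val = x.val - 1 := by
  have h1 : (1 : ZMod q).val = 1 := by
    rw [ZMod.val_one_eq_one_mod, Nat.mod_eq_of_lt (by omega)]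
  have h2 : (1 : ZMod q).val ≤ x.val := by
    rw [h1]
    exact Nat.one_le_iff_ne_zero.2 fun h => hx ((ZMod.val_eq_zero x).1 h)
  rw [ZMod.val_sub h2, h1]

lemma mem_succ_not_mem (hq : 2 ≤ q) (j k : ZMod q) :
    ((j + 1 - σ k).val < len σ k ∧ ¬ (j - σ k).val < len σ k) ↔ σ k = j + 1 := by
  constructor
  · rintro ⟨h1, h2⟩
    by_contra hne
    have hx : j + 1 - σ k ≠ 0 := fun h => hne (by linear_combination (norm := ring_nf) -h)
    have : j - σ k = (j + 1 - σ k) - 1 := by ring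
    rw [this, val_sub_one hq hx] at h2
    have := Nat.one_le_iff_ne_zero.2 fun h => hx ((ZMod.val_eq_zero _).1 h)
    omega
  · intro h
    rw [h]
    constructor
    · simpa using Nat.lt_of_lt_of_le Nat.zero_lt_one (one_le_len hq k)
    · have : j - (j + 1) = -1 := by ring
      rw [this]
      have hneg : (-1 : ZMod q).val = q - 1 := by
        have h : ((q - 1 : ℕ) : ZMod q) = -1 := by
          rw [Nat.cast_sub (by omega), ZMod.natCast_self]
          ring
        rw [← h, ZMod.val_cast_of_lt (by omega)]
      rw [hneg]
      have := len_lt (σ := σ) k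
      omega

lemma mem_not_mem_succ (hq : 2 ≤ q) (j k : ZMod q) :
    ((j - σ k).val < len σ k ∧ ¬ (j + 1 - σ k).val < len σ k) ↔ σ (k + 1) = j + 1 := by
  have hx0 : σ k = j + 1 → False → True := fun _ _ => trivial
  constructor
  · rintro ⟨h1, h2⟩
    have hne : σ k ≠ j + 1 := by
      intro h
      rw [h] at h2
      simp only [sub_self, ZMod.val_zero] at h2
      exact h2 (lt_of_lt_of_le (by omega) (one_le_len hq k))
    have hx : j + 1 - σ k ≠ 0 := fun h => hne (by linear_combination (norm := ring_nf) -h)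
    have he : j - σ k = (j + 1 - σ k) - 1 := by ring
    rw [he, val_sub_one hq hx] at h1
    have hlen : len σ k = (j + 1 - σ k).val := by omega
    have : σ (k+1) - σ k = j + 1 - σ k := by
      have := ZMod.natCast_zmod_val (j + 1 - σ k)
      have := ZMod.natCast_zmod_val (σ (k+1) - σ k)
      rw [← ZMod.natCast_zmod_val (σ (k+1) - σ k), ← ZMod.natCast_zmod_val (j + 1 - σ k),
        ← hlen]
      rfl
    linear_combination this
  · intro h
    have hne : σ k ≠ j + 1 := fun hc => add_one_ne hq k (σ.injective (h.trans hc.symm))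
    have hx : j + 1 - σ k ≠ 0 := fun hc => hne (by linear_combination (norm := ring_nf) -hc)
    have hlen : len σ k = (j + 1 - σ k).val := by
      rw [len, show σ (k+1) = j + 1 from h]
    have he : j - σ k = (j + 1 - σ k) - 1 := by ring
    rw [he, val_sub_one hq hx, hlen]
    have := Nat.one_le_iff_ne_zero.2 fun hc => hx ((ZMod.val_eq_zero _).1 hc)
    omega

lemma card_filter_eq_of_unique {α : Type*} [Fintype α] (P Q : α → Prop)
    [DecidablePred P] [DecidablePred Q] (a b : α)
    (h1 : ∀ k, (P k ∧ ¬ Q k) ↔ k = a) (h2 : ∀ k, (Q k ∧ ¬ P k) ↔ k = b) :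
    (Finset.univ.filter P).card = (Finset.univ.filter Q).card := by
  classical
  have hPa : P a ∧ ¬ Q a := (h1 a).2 rfl
  have hQb : Q b ∧ ¬ P b := (h2 b).2 rfl
  apply Finset.card_bij (fun k _ => if Q k then k else b)
  · intro k hk
    simp only [Finset.mem_filter, Finset.mem_univ, true_and] at hk ⊢
    split
    · assumption
    · exact hQb.1
  · intro k hk k' hk' he
    simp only [Finset.mem_filter, Finset.mem_univ, true_and] at hk hk'
    by_cases hq1 : Q k <;> by_cases hq2 : Q k' <;> simp only [hq1, hq2, if_true, if_false] at he
    · exact he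
    · exact absurd (he ▸ hk) hQb.2
    · exact absurd (he ▸ hk') hQb.2
    · rw [(h1 k).1 ⟨hk, hq1⟩, (h1 k').1 ⟨hk', hq2⟩]
  · intro j hj
    simp only [Finset.mem_filter, Finset.mem_univ, true_and] at hj
    by_cases hp : P j
    · exact ⟨j, by simp [hp, hj]⟩
    · refine ⟨a, by simp [hPa.1], ?_⟩
      simp only [hPa.2, if_false]
      exact ((h2 j).1 ⟨hj, hp⟩).symm

lemma scount_succ (hq : 2 ≤ q) (j : ZMod q) : Scount σ (j + 1) = Scount σ j := by
  rw [Scount, Scount]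
  apply card_filter_eq_of_unique _ _ (σ⁻¹ (j + 1)) (σ⁻¹ (j + 1) - 1)
  · intro k
    rw [mem_succ_not_mem hq]
    exact ⟨fun h => by rw [← h]; simp, fun h => by rw [h]; simp⟩
  · intro k
    rw [mem_not_mem_succ hq]
    constructor
    · intro h
      have h2 : k + 1 = σ⁻¹ (j + 1) := by rw [← h]; simp
      linear_combination h2
    · intro h
      show σ (k + 1) = j + 1
      have h2 : k + 1 = σ⁻¹ (j + 1) := by linear_combination h
      rw [h2]; simp

lemma scount_const (hq : 2 ≤ q) (j j' : ZMod q) : Scount σ j = Scount σ j' := by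
  have key : ∀ m : ℕ, ∀ j : ZMod q, Scount σ (j + m) = Scount σ j := by
    intro m
    induction m with
    | zero => simp
    | succ n ih =>
      intro j
      have : (j + (n+1 : ℕ) : ZMod q) = (j + n) + 1 := by push_cast; ring
      rw [this, scount_succ hq, ih]
  have h1 := key (j - j').val j'
  rw [ZMod.natCast_zmod_val] at h1
  rw [show j' + (j - j') = j by ring] at h1
  rw [h1]

lemma card_val_lt {m : ℕ} (hm : m ≤ q) :
    (Finset.univ.filter fun x : ZMod q => x.val < m).card = m := by
  rw [← Finset.card_range m]
  apply Finset.card_bij (fun x _ => x.val)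
  · intro x hx
    simp only [Finset.mem_filter] at hx
    simpa using hx.2
  · intro x hx y hy he
    rw [← ZMod.natCast_zmod_val x, ← ZMod.natCast_zmod_val y, he]
  · intro a ha
    rw [Finset.mem_range] at ha
    refine ⟨(a : ZMod q), ?_, ZMod.val_cast_of_lt (lt_of_lt_of_le ha hm)⟩
    simp [ZMod.val_cast_of_lt (lt_of_lt_of_le ha hm), ha]

lemma card_shift (c : ZMod q) (m : ℕ) :
    (Finset.univ.filter fun j : ZMod q => (j - c).val < m).card =
      (Finset.univ.filter fun x : ZMod q => x.val < m).card := by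
  apply Finset.card_bij (fun j _ => j - c)
  · intro j hj
    simp only [Finset.mem_filter] at hj ⊢
    exact ⟨Finset.mem_univ _, hj.2⟩
  · intro x hx y hy he
    have : x - c + c = y - c + c := by rw [he]
    simpa using this
  · intro x hx
    simp only [Finset.mem_filter] at hx
    exact ⟨x + c, by simp [hx.2], by ring⟩

lemma sum_scount : ∑ j : ZMod q, Scount σ j = ∑ k : ZMod q, len σ k := by
  simp only [Scount, Finset.card_filter]
  rw [Finset.sum_comm]
  refine Finset.sum_congr rfl fun k _ => ?_
  rw [← Finset.card_filter]
  exact (card_shift _ _).trans (card_val_lt (len_lt k).le)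

lemma scount_eq (hq : 2 ≤ q) (j : ZMod q) : Scount σ j = desNum q σ := by
  have h1 : (q : ℤ) * Scount σ j = q * desNum q σ := by
    rw [← sum_len (σ := σ) hq]
    have h2 : ∑ k : ZMod q, (len σ k : ℤ) = ((∑ k : ZMod q, len σ k : ℕ) : ℤ) := by
      push_cast; rfl
    rw [h2, ← sum_scount]
    have h3 : ∀ j' ∈ Finset.univ, Scount σ j' = Scount σ j :=
      fun j' _ => scount_const hq j' j
    have h4 : (Finset.univ : Finset (ZMod q)).card = q := by
      rw [Finset.card_univ, ZMod.card]
    rw [Finset.sum_congr rfl h3, Finset.sum_const, h4, smul_eq_mul]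
    push_cast
    ring
  have hq0 : (q : ℤ) ≠ 0 := by exact_mod_cast (by omega : q ≠ 0)
  exact_mod_cast mul_left_cancel₀ hq0 h1

lemma colsum (hq : 2 ≤ q) (j : ZMod q) :
    ∑ k : ZMod q, transMatrix q σ k j = (desNum q σ : ℝ) := by
  simp only [A_apply]
  rw [Finset.sum_boole]
  rw [show (Finset.univ.filter fun k : ZMod q => (j - σ k).val < len σ k).card
    = Scount σ j from rfl, scount_eq hq]

lemma Apow_nonneg : ∀ (n : ℕ) (i j : ZMod q), 0 ≤ (transMatrix q σ ^ n) i j := by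
  intro n
  induction n with
  | zero =>
    intro i j
    rw [pow_zero]
    rw [Matrix.one_apply]
    split <;> norm_num
  | succ n ih =>
    intro i j
    rw [pow_succ, Matrix.mul_apply]
    exact Finset.sum_nonneg fun k _ => mul_nonneg (ih i k) (A_nonneg k j)

lemma exists_between {f : ℕ → ℕ} (hf : ∀ t, 1 ≤ f t) {m s : ℕ}
    (hs : s < ∑ u ∈ Finset.range m, f u) :
    ∃ t < m, (∑ u ∈ Finset.range t, f u) ≤ s ∧ s < ∑ u ∈ Finset.range (t+1), f u := by
  induction m with
  | zero => simp at hs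
  | succ m ih =>
    by_cases h : s < ∑ u ∈ Finset.range m, f u
    · obtain ⟨t, ht, h1, h2⟩ := ih h
      exact ⟨t, by omega, h1, h2⟩
    · exact ⟨m, by omega, by omega, hs⟩

lemma sigma_shift (a : ZMod q) : ∀ t : ℕ,
    σ (a + t) = σ a + ((∑ u ∈ Finset.range t, len σ (a + u) : ℕ) : ZMod q) := by
  intro t
  induction t with
  | zero => simp
  | succ t ih =>
    have e1 : (a + ((t + 1 : ℕ) : ZMod q)) = (a + t) + 1 := by push_cast; ring
    have e2 : ((len σ (a + t) : ℕ) : ZMod q) = σ ((a + t) + 1) - σ (a + t) :=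
      ZMod.natCast_zmod_val _
    have e3 : ((∑ u ∈ Finset.range (t+1), len σ (a + u) : ℕ) : ZMod q)
        = ((∑ u ∈ Finset.range t, len σ (a + u) : ℕ) : ZMod q)
          + ((len σ (a + t) : ℕ) : ZMod q) := by
      rw [Finset.sum_range_succ]
      push_cast
      ring
    rw [e1, e3, e2]
    linear_combination ih

lemma step (hq : 2 ≤ q) {n : ℕ} {i a : ZMod q} {m : ℕ} (hm1 : 1 ≤ m) (hmq : m ≤ q)
    (hP : ∀ t : ℕ, t < m → 0 < (transMatrix q σ ^ n) i (a + t)) :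
    ∀ s : ℕ, s < q → s < (∑ u ∈ Finset.range m, len σ (a + u)) →
      0 < (transMatrix q σ ^ (n+1)) i (σ a + s) := by
  intro s hsq hsc
  obtain ⟨t, htm, h1, h2⟩ := exists_between (fun u => one_le_len hq (a + u)) hsc
  rw [Finset.sum_range_succ] at h2
  have hApos : 0 < transMatrix q σ (a + t) (σ a + s) := by
    rw [A_pos_iff]
    have e : (σ a + (s : ZMod q)) - σ (a + t)
        = (((s - ∑ u ∈ Finset.range t, len σ (a + u) : ℕ)) : ZMod q) := by
      rw [sigma_shift a t, Nat.cast_sub h1]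
      push_cast
      ring
    rw [e, ZMod.val_cast_of_lt (by omega)]
    omega
  rw [pow_succ, Matrix.mul_apply]
  have hterm : 0 < (transMatrix q σ ^ n) i (a + t) * transMatrix q σ (a + t) (σ a + s) :=
    mul_pos (hP t htm) hApos
  refine lt_of_lt_of_le hterm (Finset.single_le_sum (f := fun k =>
    (transMatrix q σ ^ n) i k * transMatrix q σ k (σ a + s)) ?_ (Finset.mem_univ _))
  exact fun k _ => mul_nonneg (Apow_nonneg n i k) (A_nonneg k _)

lemma plain_step (hq : 2 ≤ q) {n : ℕ} {i a : ZMod q} {m : ℕ} (hm1 : 1 ≤ m) (hmq : m ≤ q)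
    (hP : ∀ t : ℕ, t < m → 0 < (transMatrix q σ ^ n) i (a + t)) :
    ∀ t : ℕ, t < m → 0 < (transMatrix q σ ^ (n+1)) i (σ a + t) := by
  intro t ht
  refine step hq hm1 hmq hP t (lt_of_lt_of_le ht hmq) (lt_of_lt_of_le ht ?_)
  calc m = ∑ _u ∈ Finset.range m, 1 := by simp
  _ ≤ _ := Finset.sum_le_sum fun u _ => one_le_len hq _

lemma sigma_pow_succ (n : ℕ) (i : ZMod q) : (σ ^ (n + 1)) i = σ ((σ ^ n) i) := by
  rw [pow_succ']
  rfl

lemma iterate_plain (hq : 2 ≤ q) {n : ℕ} {i : ZMod q} {m : ℕ} (hm1 : 1 ≤ m) (hmq : m ≤ q)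
    (hP : ∀ t : ℕ, t < m → 0 < (transMatrix q σ ^ n) i ((σ ^ n) i + t)) :
    ∀ k : ℕ, ∀ t : ℕ, t < m → 0 < (transMatrix q σ ^ (n + k)) i ((σ ^ (n + k)) i + t) := by
  intro k
  induction k with
  | zero => simpa using hP
  | succ k ih =>
    have h2 := plain_step hq hm1 hmq ih
    rw [← sigma_pow_succ] at h2
    exact h2

lemma exists_heavy (hq : 2 ≤ q) (hd2 : 2 ≤ desNum q σ) : ∃ h : ZMod q, 2 ≤ len σ h := by
  by_contra hc
  push_neg at hc
  have h1 : ∑ k : ZMod q, (len σ k : ℤ) ≤ ∑ _k : ZMod q, (1 : ℤ) := by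
    refine Finset.sum_le_sum fun k _ => ?_
    exact_mod_cast Nat.lt_succ_iff.1 (hc k)
  rw [sum_len (σ := σ) hq] at h1
  have h2 : ∑ _k : ZMod q, (1 : ℤ) = q := by
    rw [Finset.sum_const, Finset.card_univ, ZMod.card]
    simp
  rw [h2] at h1
  have hq' : (2 : ℤ) ≤ q := by exact_mod_cast hq
  have hd' : (2 : ℤ) ≤ desNum q σ := by exact_mod_cast hd2
  nlinarith

lemma reach_master (hq : 2 ≤ q) (hσ : IsQCycle q σ) (hd2 : 2 ≤ desNum q σ) (i : ZMod q) :
    ∀ s : ℕ, ∃ n m : ℕ, min (s + 1) q ≤ m ∧ m ≤ q ∧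
      ∀ t : ℕ, t < m → 0 < (transMatrix q σ ^ n) i ((σ ^ n) i + t) := by
  intro s
  induction s with
  | zero =>
    refine ⟨0, 1, by omega, by omega, fun t ht => ?_⟩
    have ht0 : t = 0 := by omega
    subst ht0
    have : (σ ^ 0) i + ((0 : ℕ) : ZMod q) = i := by simp
    rw [pow_zero, this, Matrix.one_apply_eq]
    norm_num
  | succ s ih =>
    obtain ⟨n, m, hmin, hmq, hP⟩ := ih
    by_cases hcase : s + 2 ≤ m
    · exact ⟨n, m, by omega, hmq, hP⟩
    · by_cases hq2 : q ≤ s + 1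
      · exact ⟨n, m, by omega, hmq, hP⟩
      -- here m = s + 1 < q
      have hm : m = s + 1 := by omega
      have hm1 : 1 ≤ m := by omega
      obtain ⟨h, hlenh⟩ := exists_heavy hq hd2
      obtain ⟨k, hk⟩ := hσ ((σ ^ n) i) h
      have hP2 := iterate_plain hq hm1 hmq hP k
      have hbase : (σ ^ (n + k)) i = h := by
        rw [add_comm n k, pow_add, Equiv.Perm.mul_apply]
        exact hk
      refine ⟨n + k + 1, m + 1, by omega, by omega, ?_⟩
      intro t ht
      rw [show (σ ^ (n + k + 1)) i = σ ((σ ^ (n + k)) i) from sigma_pow_succ _ _, hbase]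
      rw [hbase] at hP2
      refine step hq hm1 hmq hP2 t (by omega) ?_
      have hsum : m + 1 ≤ ∑ u ∈ Finset.range m, len σ (h + u) := by
        have : ∑ _u ∈ Finset.range m, 1 < ∑ u ∈ Finset.range m, len σ (h + u) := by
          refine Finset.sum_lt_sum (fun u _ => one_le_len hq _) ⟨0, ?_, ?_⟩
          · simp [hm]
          · simpa using Nat.lt_of_lt_of_le (by norm_num : 1 < 2) hlenh
        simpa using this
      omega

lemma reach_full (hq : 2 ≤ q) (hσ : IsQCycle q σ) (hd2 : 2 ≤ desNum q σ) (i : ZMod q) :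
    ∃ n : ℕ, ∀ j : ZMod q, 0 < (transMatrix q σ ^ n) i j := by
  obtain ⟨n, m, hmin, hmq, hP⟩ := reach_master hq hσ hd2 i (q - 1)
  have hm : m = q := by omega
  refine ⟨n, fun j => ?_⟩
  have := hP (j - (σ ^ n) i).val (by rw [hm]; exact ZMod.val_lt _)
  rwa [ZMod.natCast_zmod_val, add_sub_cancel] at this

lemma persist (hq : 2 ≤ q) (hd2 : 2 ≤ desNum q σ) {n : ℕ} {i : ZMod q}
    (h : ∀ j, 0 < (transMatrix q σ ^ n) i j) :
    ∀ j, 0 < (transMatrix q σ ^ (n + 1)) i j := by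
  intro j
  have hcs := colsum (σ := σ) hq j
  have hex : ∃ k, 0 < transMatrix q σ k j := by
    by_contra hc
    push_neg at hc
    have hz : ∀ k ∈ Finset.univ, transMatrix q σ k j = 0 :=
      fun k _ => le_antisymm (hc k) (A_nonneg k j)
    rw [Finset.sum_congr rfl hz, Finset.sum_const_zero] at hcs
    have : desNum q σ = 0 := by exact_mod_cast hcs.symm
    omega
  obtain ⟨k, hk⟩ := hex
  rw [pow_succ, Matrix.mul_apply]
  refine lt_of_lt_of_le (mul_pos (h k) hk) (Finset.single_le_sum (f := fun k' =>
    (transMatrix q σ ^ n) i k' * transMatrix q σ k' j) ?_ (Finset.mem_univ _))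
  exact fun k' _ => mul_nonneg (Apow_nonneg n i k') (A_nonneg k' _)

lemma primitive (hq : 2 ≤ q) (hσ : IsQCycle q σ) (hd2 : 2 ≤ desNum q σ) :
    ∃ N : ℕ, ∀ i j : ZMod q, 0 < (transMatrix q σ ^ N) i j := by
  choose f hf using fun i => reach_full hq hσ hd2 i
  refine ⟨Finset.univ.sup f, fun i j => ?_⟩
  have hle : f i ≤ Finset.univ.sup f := Finset.le_sup (Finset.mem_univ i)
  obtain ⟨c, hc⟩ := Nat.exists_eq_add_of_le hle
  rw [hc]
  suffices hsuff : ∀ c j', 0 < (transMatrix q σ ^ (f i + c)) i j' from hsuff c j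
  intro c
  induction c with
  | zero => simpa using hf i
  | succ c ih => exact persist hq hd2 ih

/-- L¹ norm -/
def E (v : ZMod q → ℝ) : ℝ := ∑ i, |v i|

def Stoch (P : Matrix (ZMod q) (ZMod q) ℝ) : Prop :=
  (∀ i j, 0 ≤ P i j) ∧ ∀ j, ∑ i, P i j = 1

lemma E_nonneg (v : ZMod q → ℝ) : 0 ≤ E v :=
  Finset.sum_nonneg fun i _ => abs_nonneg _

lemma abs_le_E (v : ZMod q → ℝ) (i : ZMod q) : |v i| ≤ E v :=
  Finset.single_le_sum (fun j _ => abs_nonneg (v j)) (Finset.mem_univ i)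

lemma norm_le_E (v : ZMod q → ℝ) : ‖v‖ ≤ E v := by
  rw [pi_norm_le_iff_of_nonneg (E_nonneg v)]
  intro i
  rw [Real.norm_eq_abs]
  exact abs_le_E v i

lemma E_eq_one_of_prob {v : ZMod q → ℝ} (hv : IsProbVec q v) : E v = 1 := by
  rw [E, ← hv.2]
  exact Finset.sum_congr rfl fun i _ => abs_of_nonneg (hv.1 i)

lemma E_sub_le {u v : ZMod q → ℝ} (hu : IsProbVec q u) (hv : IsProbVec q v) :
    E (u - v) ≤ 2 := by
  have : E (u - v) ≤ E u + E v := by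
    rw [E, E, E, ← Finset.sum_add_distrib]
    refine Finset.sum_le_sum fun i _ => ?_
    exact (abs_sub (u i) (v i))
  rw [E_eq_one_of_prob hu, E_eq_one_of_prob hv] at this
  linarith

lemma stoch_mul {P Q : Matrix (ZMod q) (ZMod q) ℝ} (hP : Stoch P) (hQ : Stoch Q) :
    Stoch (P * Q) := by
  constructor
  · intro i j
    rw [Matrix.mul_apply]
    exact Finset.sum_nonneg fun k _ => mul_nonneg (hP.1 i k) (hQ.1 k j)
  · intro j
    simp_rw [Matrix.mul_apply]
    rw [Finset.sum_comm]
    have : ∀ k ∈ Finset.univ, ∑ i : ZMod q, P i k * Q k j = Q k j := by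
      intro k _
      rw [← Finset.sum_mul, hP.2 k, one_mul]
    rw [Finset.sum_congr rfl this, hQ.2 j]

lemma stoch_one : Stoch (1 : Matrix (ZMod q) (ZMod q) ℝ) := by
  constructor
  · intro i j
    rw [Matrix.one_apply]
    split <;> norm_num
  · intro j
    simp [Matrix.one_apply]

lemma stoch_pow {P : Matrix (ZMod q) (ZMod q) ℝ} (hP : Stoch P) (n : ℕ) : Stoch (P ^ n) := by
  induction n with
  | zero => rw [pow_zero]; exact stoch_one
  | succ n ih => rw [pow_succ]; exact stoch_mul ih hP

lemma sum_mulVec {P : Matrix (ZMod q) (ZMod q) ℝ} (hP : Stoch P) (v : ZMod q → ℝ) :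
    ∑ i, P.mulVec v i = ∑ j, v j := by
  simp_rw [Matrix.mulVec, dotProduct]
  rw [Finset.sum_comm]
  refine Finset.sum_congr rfl fun j _ => ?_
  rw [← Finset.sum_mul, hP.2 j, one_mul]

lemma prob_mulVec {P : Matrix (ZMod q) (ZMod q) ℝ} (hP : Stoch P) {v : ZMod q → ℝ}
    (hv : IsProbVec q v) : IsProbVec q (P.mulVec v) := by
  constructor
  · intro i
    exact Finset.sum_nonneg fun j _ => mul_nonneg (hP.1 i j) (hv.1 j)
  · rw [sum_mulVec hP, hv.2]

lemma E_mulVec_le {P : Matrix (ZMod q) (ZMod q) ℝ} (hP : Stoch P) (v : ZMod q → ℝ) :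
    E (P.mulVec v) ≤ E v := by
  have h1 : ∀ i, |P.mulVec v i| ≤ ∑ j, P i j * |v j| := by
    intro i
    refine (Finset.abs_sum_le_sum_abs _ _).trans ?_
    refine Finset.sum_le_sum fun j _ => ?_
    rw [abs_mul, abs_of_nonneg (hP.1 i j)]
  calc E (P.mulVec v) ≤ ∑ i, ∑ j, P i j * |v j| := Finset.sum_le_sum fun i _ => h1 i
  _ = ∑ j, (∑ i, P i j) * |v j| := by rw [Finset.sum_comm]; simp_rw [Finset.sum_mul]
  _ = E v := by
      refine Finset.sum_congr rfl fun j _ => ?_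
      rw [hP.2 j, one_mul]

lemma E_contract {P : Matrix (ZMod q) (ZMod q) ℝ} (hP : Stoch P) {ε : ℝ}
    (hε : ∀ i j, ε ≤ P i j) {w : ZMod q → ℝ} (hw : ∑ j, w j = 0) :
    E (P.mulVec w) ≤ (1 - q * ε) * E w := by
  have key : ∀ i, P.mulVec w i = ∑ j, (P i j - ε) * w j := by
    intro i
    rw [Matrix.mulVec, dotProduct]
    rw [show ∑ j, (P i j - ε) * w j = ∑ j, P i j * w j - ε * ∑ j, w j by
      rw [Finset.mul_sum, ← Finset.sum_sub_distrib]; exact Finset.sum_congr rfl fun j _ => by ring]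
    rw [hw, mul_zero, sub_zero]
  have h1 : ∀ i, |P.mulVec w i| ≤ ∑ j, (P i j - ε) * |w j| := by
    intro i
    rw [key i]
    refine (Finset.abs_sum_le_sum_abs _ _).trans ?_
    refine Finset.sum_le_sum fun j _ => ?_
    rw [abs_mul, abs_of_nonneg (by linarith [hε i j])]
  calc E (P.mulVec w) ≤ ∑ i, ∑ j, (P i j - ε) * |w j| := Finset.sum_le_sum fun i _ => h1 i
  _ = ∑ j, (∑ i, (P i j - ε)) * |w j| := by rw [Finset.sum_comm]; simp_rw [Finset.sum_mul]
  _ = ∑ j, (1 - q * ε) * |w j| := by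
      refine Finset.sum_congr rfl fun j _ => ?_
      rw [Finset.sum_sub_distrib, hP.2 j, Finset.sum_const, Finset.card_univ, ZMod.card,
        nsmul_eq_mul]
  _ = (1 - q * ε) * E w := by rw [E, Finset.mul_sum]

end PF

open PF

set_option maxHeartbeats 1000000 in
/-- Perron–Frobenius for the transition matrix `A` of a `q`-cycle `σ` with
`des σ = d ≥ 2`: there is a unique probability vector `ℓ` with `Aℓ = dℓ`; it has
strictly positive components and `ℓ = lim (1/dⁿ) Aⁿ v` for every probability
vector `v`. -/
theorem transMatrix_perron_frobenius (q d : ℕ) [NeZero q] (hq : 2 ≤ q)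
    (σ : Equiv.Perm (ZMod q)) (hσ : IsQCycle q σ) (hd : desNum q σ = d)
    (hd2 : 2 ≤ d) :
    (∃! ℓ : ZMod q → ℝ, IsProbVec q ℓ ∧ (transMatrix q σ).mulVec ℓ = (d : ℝ) • ℓ) ∧
    (∀ ℓ : ZMod q → ℝ, IsProbVec q ℓ → (transMatrix q σ).mulVec ℓ = (d : ℝ) • ℓ →
      (∀ i, 0 < ℓ i) ∧
      ∀ v : ZMod q → ℝ, IsProbVec q v →
        Filter.Tendsto (fun n : ℕ => (1 / (d : ℝ) ^ n) • (transMatrix q σ ^ n).mulVec v)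
          Filter.atTop (nhds ℓ)) := by

  subst hd
  set A := transMatrix q σ with hA
  have hD0 : (0 : ℝ) < (desNum q σ : ℝ) := by
    have : 0 < desNum q σ := by omega
    exact_mod_cast this
  have hq0 : (0 : ℝ) < (q : ℝ) := by
    have : 0 < q := by omega
    exact_mod_cast this
  set B := ((desNum q σ : ℝ))⁻¹ • A with hB
  have hBstoch : Stoch B := by
    constructor
    · intro i j
      rw [hB, Matrix.smul_apply, smul_eq_mul]
      exact mul_nonneg (by positivity) (A_nonneg i j)
    · intro j
      simp_rw [hB, Matrix.smul_apply, smul_eq_mul]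
      rw [← Finset.mul_sum, colsum hq j, inv_mul_cancel₀ (ne_of_gt hD0)]
  have hBn : ∀ n, Stoch (B ^ n) := stoch_pow hBstoch
  have hBpow : ∀ (n : ℕ) (v : ZMod q → ℝ),
      (B ^ n).mulVec v = (1 / (desNum q σ : ℝ) ^ n) • (A ^ n).mulVec v := by
    intro n v
    rw [hB, smul_pow, Matrix.smul_mulVec, one_div, inv_pow]
  obtain ⟨N, hN⟩ := primitive hq hσ hd2
  set M := N + 1 with hM
  have hM0 : 0 < M := Nat.succ_pos N
  have hAM : ∀ i j, 0 < (A ^ M) i j := fun i j => persist hq hd2 (fun j' => hN i j') j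
  have hBM : ∀ i j, 0 < (B ^ M) i j := by
    intro i j
    rw [hB, smul_pow, Matrix.smul_apply, smul_eq_mul]
    exact mul_pos (by positivity) (hAM i j)
  set ε := Finset.univ.inf' ⟨((0 : ZMod q), (0 : ZMod q)), Finset.mem_univ _⟩
    (fun p : ZMod q × ZMod q => (B ^ M) p.1 p.2) with hεdef
  have hε0 : 0 < ε := (Finset.lt_inf'_iff _).2 fun p _ => hBM p.1 p.2
  have hεle : ∀ i j, ε ≤ (B ^ M) i j := fun i j => Finset.inf'_le _ (Finset.mem_univ (i, j))
  set c := 1 - (q : ℝ) * ε with hc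
  have hc1 : c < 1 := by
    have : 0 < (q : ℝ) * ε := mul_pos hq0 hε0
    rw [hc]; linarith
  have hc0 : 0 ≤ c := by
    have h1 : ∑ i : ZMod q, ε ≤ ∑ i : ZMod q, (B ^ M) i 0 :=
      Finset.sum_le_sum fun i _ => hεle i 0
    rw [(hBn M).2 0, Finset.sum_const, Finset.card_univ, ZMod.card, nsmul_eq_mul] at h1
    rw [hc]; linarith
  have hdecayM : ∀ (k : ℕ) (w : ZMod q → ℝ), ∑ j, w j = 0 →
      E (((B ^ M) ^ k).mulVec w) ≤ c ^ k * E w := by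
    intro k
    induction k with
    | zero => intro w _; rw [pow_zero, pow_zero, Matrix.one_mulVec, one_mul]
    | succ k ih =>
      intro w hw
      rw [pow_succ, ← Matrix.mulVec_mulVec]
      have h1 := ih ((B ^ M).mulVec w) (by rw [sum_mulVec (hBn M), hw])
      have h2 := E_contract (hBn M) hεle hw
      calc E (((B ^ M) ^ k).mulVec ((B ^ M).mulVec w)) ≤ c ^ k * E ((B ^ M).mulVec w) := h1
      _ ≤ c ^ k * (c * E w) := mul_le_mul_of_nonneg_left h2 (pow_nonneg hc0 k)
      _ = c ^ (k + 1) * E w := by ring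
  have hdecay : ∀ (n : ℕ) (w : ZMod q → ℝ), ∑ j, w j = 0 →
      E ((B ^ n).mulVec w) ≤ c ^ (n / M) * E w := by
    intro n w hw
    have hBe : B ^ n = (B ^ M) ^ (n / M) * B ^ (n % M) := by
      rw [← pow_mul, ← pow_add, Nat.div_add_mod]
    rw [hBe, ← Matrix.mulVec_mulVec]
    have h1 := hdecayM (n / M) ((B ^ (n % M)).mulVec w) (by rw [sum_mulVec (hBn _), hw])
    refine h1.trans ?_
    exact mul_le_mul_of_nonneg_left (E_mulVec_le (hBn (n % M)) w) (pow_nonneg hc0 _)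
  -- the sequence
  set v0 : ZMod q → ℝ := fun _ => (q : ℝ)⁻¹ with hv0
  have hv0p : IsProbVec q v0 := by
    constructor
    · intro i; positivity
    · rw [hv0, Finset.sum_const, Finset.card_univ, ZMod.card, nsmul_eq_mul,
        mul_inv_cancel₀ (ne_of_gt hq0)]
  set x : ℕ → ZMod q → ℝ := fun n => (B ^ n).mulVec v0 with hx
  have hxp : ∀ n, IsProbVec q (x n) := fun n => prob_mulVec (hBn n) hv0p
  have hdistb : ∀ (K m n : ℕ), K ≤ m → m ≤ n → dist (x n) (x m) ≤ 2 * c ^ (K / M) := by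
    intro K m n hK hmn
    have hsplit : x n - x m = (B ^ m).mulVec (x (n - m) - v0) := by
      rw [Matrix.mulVec_sub, hx]
      simp only
      rw [Matrix.mulVec_mulVec, ← pow_add, Nat.add_sub_cancel' hmn]
    calc dist (x n) (x m) = ‖x n - x m‖ := dist_eq_norm _ _
    _ ≤ E (x n - x m) := norm_le_E _
    _ = E ((B ^ m).mulVec (x (n - m) - v0)) := by rw [hsplit]
    _ ≤ c ^ (m / M) * E (x (n - m) - v0) := hdecay m _
        (by simp only [Pi.sub_apply]
            rw [Finset.sum_sub_distrib, (hxp _).2, hv0p.2, sub_self])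
    _ ≤ c ^ (m / M) * 2 :=
        mul_le_mul_of_nonneg_left (E_sub_le (hxp _) hv0p) (pow_nonneg hc0 _)
    _ ≤ c ^ (K / M) * 2 := by
        have h := pow_le_pow_of_le_one hc0 hc1.le (Nat.div_le_div_right (c := M) hK)
        linarith
    _ = 2 * c ^ (K / M) := by ring
  have hbtend : Filter.Tendsto (fun K : ℕ => 2 * c ^ (K / M)) Filter.atTop (nhds 0) := by
    have h1 : Filter.Tendsto (fun k : ℕ => c ^ k) Filter.atTop (nhds 0) :=
      tendsto_pow_atTop_nhds_zero_of_lt_one hc0 hc1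
    have h2 : Filter.Tendsto (fun K : ℕ => K / M) Filter.atTop Filter.atTop := by
      rw [Filter.tendsto_atTop]
      intro b
      filter_upwards [Filter.eventually_ge_atTop (M * b)] with K hK
      rw [Nat.le_div_iff_mul_le hM0, Nat.mul_comm]
      exact hK
    have h3 := h1.comp h2
    have h4 := h3.const_mul (2 : ℝ)
    simpa using h4
  have hcauchy : CauchySeq x := by
    apply cauchySeq_of_le_tendsto_0 (fun K : ℕ => 2 * c ^ (K / M)) _ hbtend
    intro n m K hn hm
    rcases le_total m n with h | h
    · exact hdistb K m n hm h
    · rw [dist_comm]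
      exact hdistb K n m hn h
  obtain ⟨ℓ, hℓ⟩ := cauchySeq_tendsto_of_complete hcauchy
  have hpt : ∀ i, Filter.Tendsto (fun n => x n i) Filter.atTop (nhds (ℓ i)) :=
    fun i => (tendsto_pi_nhds.1 hℓ) i
  have hℓprob : IsProbVec q ℓ := by
    constructor
    · intro i
      exact ge_of_tendsto (hpt i) (Filter.Eventually.of_forall fun n => (hxp n).1 i)
    · have h1 : Filter.Tendsto (fun n => ∑ i, x n i) Filter.atTop (nhds (∑ i, ℓ i)) :=
        tendsto_finset_sum _ (fun i _ => hpt i)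
      have h2 : (fun n => ∑ i, x n i) = fun _ => (1 : ℝ) := funext fun n => (hxp n).2
      rw [h2] at h1
      exact (tendsto_nhds_unique tendsto_const_nhds h1).symm
  have hcont : Continuous fun v : ZMod q → ℝ => B.mulVec v := by
    have h := LinearMap.continuous_of_finiteDimensional (Matrix.mulVecLin B)
    exact h
  have hfix : B.mulVec ℓ = ℓ := by
    have h1 : Filter.Tendsto (fun n => x (n + 1)) Filter.atTop (nhds ℓ) :=
      hℓ.comp (Filter.tendsto_add_atTop_nat 1)
    have h2 : (fun n => x (n + 1)) = fun n => B.mulVec (x n) := by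
      funext n
      rw [hx]
      simp only
      rw [pow_succ', ← Matrix.mulVec_mulVec]
    rw [h2] at h1
    have h3 : Filter.Tendsto (fun n => B.mulVec (x n)) Filter.atTop (nhds (B.mulVec ℓ)) :=
      ((hcont.tendsto ℓ).comp hℓ)
    exact tendsto_nhds_unique h3 h1
  have hfixpow : ∀ n, (B ^ n).mulVec ℓ = ℓ := by
    intro n
    induction n with
    | zero => rw [pow_zero, Matrix.one_mulVec]
    | succ n ih => rw [pow_succ, ← Matrix.mulVec_mulVec, hfix, ih]
  have heig : A.mulVec ℓ = (desNum q σ : ℝ) • ℓ := by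
    calc A.mulVec ℓ = ((desNum q σ : ℝ) • B).mulVec ℓ := by
          rw [hB, smul_smul, mul_inv_cancel₀ (ne_of_gt hD0), one_smul]
    _ = (desNum q σ : ℝ) • (B.mulVec ℓ) := Matrix.smul_mulVec _ _ _
    _ = (desNum q σ : ℝ) • ℓ := by rw [hfix]
  have huniq : ∀ ℓ' : ZMod q → ℝ, IsProbVec q ℓ' →
      A.mulVec ℓ' = (desNum q σ : ℝ) • ℓ' → ℓ' = ℓ := by
    intro ℓ' hp' he'
    have hfix' : B.mulVec ℓ' = ℓ' := by
      rw [hB, Matrix.smul_mulVec, he', smul_smul,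
        inv_mul_cancel₀ (ne_of_gt hD0), one_smul]
    have hfixn' : ∀ n, (B ^ n).mulVec ℓ' = ℓ' := by
      intro n
      induction n with
      | zero => rw [pow_zero, Matrix.one_mulVec]
      | succ n ih => rw [pow_succ, ← Matrix.mulVec_mulVec, hfix', ih]
    have hwsum : ∑ j, (ℓ' - ℓ) j = 0 := by
      simp only [Pi.sub_apply]
      rw [Finset.sum_sub_distrib, hp'.2, hℓprob.2, sub_self]
    have hwfix : (B ^ M).mulVec (ℓ' - ℓ) = ℓ' - ℓ := by
      rw [Matrix.mulVec_sub, hfixn' M, hfixpow M]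
    have hEw := E_contract (hBn M) hεle hwsum
    rw [hwfix] at hEw
    have hEw0 : E (ℓ' - ℓ) = 0 := by
      have h0 := E_nonneg (q := q) (ℓ' - ℓ)
      nlinarith
    funext i
    have h1 : |(ℓ' - ℓ) i| ≤ 0 := hEw0 ▸ abs_le_E (ℓ' - ℓ) i
    have h2 : (ℓ' - ℓ) i = 0 := abs_eq_zero.1 (le_antisymm h1 (abs_nonneg _))
    have h3 : ℓ' i - ℓ i = 0 := h2
    linarith
  have hℓpos : ∀ i, 0 < ℓ i := by
    intro i
    have h1 : ℓ i = ∑ j, (B ^ M) i j * ℓ j := by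
      conv_lhs => rw [← hfixpow M]
      rw [Matrix.mulVec, dotProduct]
    obtain ⟨j0, hj0⟩ : ∃ j, 0 < ℓ j := by
      by_contra hcon
      push_neg at hcon
      have : ∑ j, ℓ j ≤ 0 := Finset.sum_nonpos fun j _ => hcon j
      rw [hℓprob.2] at this
      linarith
    rw [h1]
    exact Finset.sum_pos' (fun j _ => mul_nonneg (hBM i j).le (hℓprob.1 j))
      ⟨j0, Finset.mem_univ j0, mul_pos (hBM i j0) hj0⟩
  have hconv : ∀ v : ZMod q → ℝ, IsProbVec q v →
      Filter.Tendsto (fun n : ℕ => (B ^ n).mulVec v) Filter.atTop (nhds ℓ) := by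
    intro v hv
    rw [tendsto_iff_dist_tendsto_zero]
    apply squeeze_zero (fun n => dist_nonneg) (g := fun n => 2 * c ^ (n / M))
    · intro n
      calc dist ((B ^ n).mulVec v) ℓ = ‖(B ^ n).mulVec v - ℓ‖ := dist_eq_norm _ _
      _ ≤ E ((B ^ n).mulVec v - ℓ) := norm_le_E _
      _ = E ((B ^ n).mulVec (v - ℓ)) := by
          rw [Matrix.mulVec_sub, hfixpow n]
      _ ≤ c ^ (n / M) * E (v - ℓ) := hdecay n _ (by
          simp only [Pi.sub_apply]
          rw [Finset.sum_sub_distrib, hv.2, hℓprob.2, sub_self])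
      _ ≤ c ^ (n / M) * 2 :=
          mul_le_mul_of_nonneg_left (E_sub_le hv hℓprob) (pow_nonneg hc0 _)
      _ = 2 * c ^ (n / M) := by ring
    · exact hbtend
  constructor
  · exact ⟨ℓ, ⟨hℓprob, heig⟩, fun ℓ' h' => huniq ℓ' h'.1 h'.2⟩
  · intro ℓ' hp' he'
    obtain rfl := huniq ℓ' hp' he'
    refine ⟨hℓpos, fun v hv => ?_⟩
    have heqfun : (fun n : ℕ => (1 / (desNum q σ : ℝ) ^ n) • (A ^ n).mulVec v)
        = fun n : ℕ => (B ^ n).mulVec v := funext fun n => (hBpow n v).symm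
    rw [hA] at heqfun
    rw [heqfun]
    exact hconv v hv
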